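/- arXiv:2006.01556 — 3 statements merged into one kernel-verified Lean document; each statement's English description precedes it below -/
import Mathlib

section
/- Let f : X × Y → ℝ and define recursively r_0 = f and r_{k+1}(x,y) = r_k(x,y) - r_k(x_{k+1}, y) · r_k(x, y_{k+1}) / r_k(x_{k+1}, y_{k+1}), where r_k(x_{k+1}, y_{k+1}) ≠ 0 at each step. Then for the matrix C_k with entries (C_k)_{ij} = f(x_i, y_j), 1 ≤ i,j ≤ k, one has det C_k = r_0(x_1,y_1) · r_1(x_2,y_2) · ... · r_{k-1}(x_k,y_k); in particular det C_k ≠ 0. -/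
private lemma aca_aux {X Y : Type*} (x : ℕ → X) (y : ℕ → Y) (r : ℕ → X → Y → ℝ)
    (hrec : ∀ j, r (j + 1) = fun a b =>
      r j a b - r j (x (j + 1)) b * r j a (y (j + 1)) / r j (x (j + 1)) (y (j + 1))) :
    ∀ (k m : ℕ), (∀ j, m ≤ j → j < m + k → r j (x (j + 1)) (y (j + 1)) ≠ 0) →
    (Matrix.of fun i j : Fin k => r m (x (m + i.val + 1)) (y (m + j.val + 1))).det =
      ∏ j ∈ Finset.range k, r (m + j) (x (m + j + 1)) (y (m + j + 1)) := by
  intro k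
  induction k with
  | zero => intro m _; simp
  | succ k ih =>
    intro m hp
    have hpiv : r m (x (m + 1)) (y (m + 1)) ≠ 0 := hp m le_rfl (by omega)
    set M : Matrix (Fin (k+1)) (Fin (k+1)) ℝ :=
      Matrix.of fun i j : Fin (k+1) => r m (x (m + i.val + 1)) (y (m + j.val + 1)) with hM
    set B : Matrix (Fin (k+1)) (Fin (k+1)) ℝ :=
      Matrix.of fun i j : Fin (k+1) =>
        if i = 0 then M 0 j else M i j - M i 0 / M 0 0 * M 0 j with hB
    have hM00 : M 0 0 = r m (x (m + 1)) (y (m + 1)) := by simp [hM]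
    have hdet : M.det = B.det := by
      apply Matrix.det_eq_of_forall_row_eq_smul_add_const
        (fun i => if i = 0 then 0 else M i 0 / M 0 0) 0 (by simp)
      intro i j
      have hB0j : B 0 j = M 0 j := by simp [hB]
      rw [hB0j]
      by_cases hi : i = 0
      · simp [hB, hi]
      · simp only [hB, Matrix.of_apply, if_neg hi]
        ring
    have hB0 : ∀ i : Fin (k+1), i ≠ 0 → B i 0 = 0 := by
      intro i hi
      simp only [hB, Matrix.of_apply, if_neg hi]
      field_simp [hM00.symm ▸ hpiv]
      ring
    have hsub : B.submatrix (Fin.succAbove 0) Fin.succ =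
        Matrix.of fun i j : Fin k =>
          r (m + 1) (x ((m + 1) + i.val + 1)) (y ((m + 1) + j.val + 1)) := by
      ext i j
      have h1 : ((0 : Fin (k+1)).succAbove i) ≠ 0 := Fin.succAbove_ne 0 i
      simp only [Matrix.submatrix_apply, hB, Matrix.of_apply, if_neg h1, hM]
      have hsa : ((0 : Fin (k+1)).succAbove i : ℕ) = i.val + 1 := by
        simp [Fin.succAbove]
      simp only [Matrix.of_apply, hsa, Fin.val_succ, Fin.val_zero]
      rw [hrec m]
      have e1 : m + (i.val + 1) + 1 = m + 1 + i.val + 1 := by ring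
      have e2 : m + (j.val + 1) + 1 = m + 1 + j.val + 1 := by ring
      simp only [e1, e2]
      have e3 : m + 0 + 1 = m + 1 := by ring
      simp only [e3]
      ring
    have hdetB : B.det = B 0 0 * (B.submatrix (Fin.succAbove 0) Fin.succ).det := by
      rw [Matrix.det_succ_column_zero]
      rw [Finset.sum_eq_single 0]
      · simp
      · intro i _ hi
        rw [hB0 i hi]; ring
      · simp
    have hIH := ih (m + 1) (fun j hj1 hj2 => hp j (by omega) (by omega))
    rw [hdet, hdetB, hsub, hIH]
    have hB00 : B 0 0 = r m (x (m + 1)) (y (m + 1)) := by simp [hB, hM]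
    rw [hB00, Finset.prod_range_succ', mul_comm]
    simp only [show ∀ j, m + 1 + j = m + (j + 1) from fun j => by omega, Nat.add_zero]

theorem aca_det_identity {X Y : Type*} (f : X → Y → ℝ) (k : ℕ)
    (x : ℕ → X) (y : ℕ → Y) (r : ℕ → X → Y → ℝ)
    (hr0 : r 0 = f)
    (hrec : ∀ j, r (j + 1) = fun a b =>
      r j a b - r j (x (j + 1)) b * r j a (y (j + 1)) / r j (x (j + 1)) (y (j + 1)))
    (hpiv : ∀ j < k, r j (x (j + 1)) (y (j + 1)) ≠ 0) :
    (Matrix.of fun i j : Fin k => f (x (i.val + 1)) (y (j.val + 1))).det =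
        ∏ j ∈ Finset.range k, r j (x (j + 1)) (y (j + 1)) ∧
      (Matrix.of fun i j : Fin k => f (x (i.val + 1)) (y (j.val + 1))).det ≠ 0 := by
  have h := aca_aux x y r hrec k 0 (fun j hj1 hj2 => hpiv j (by omega))
  simp only [Nat.zero_add, hr0] at h
  refine ⟨h, h ▸ Finset.prod_ne_zero_iff.mpr fun j hj => hpiv j (Finset.mem_range.mp hj)⟩
end

section
/- With the recursion r_0 = f, r_{k+1}(x,y) = r_k(x,y) - r_k(x_{k+1},y)·r_k(x,y_{k+1})/r_k(x_{k+1},y_{k+1}) (all pivots r_j(x_{j+1},y_{j+1}) nonzero), the function s_k := f - r_k satisfies the interpolation property s_k(x_i, y) = f(x_i, y) for all i = 1,...,k and all y, and s_k(x, y_j) = f(x, y_j) for all j = 1,...,k and all x. -/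
theorem aca_interpolation_property {X Y : Type*} (f : X → Y → ℝ) (k : ℕ)
    (x : ℕ → X) (y : ℕ → Y) (r : ℕ → X → Y → ℝ)
    (hr0 : r 0 = f)
    (hrec : ∀ j, r (j + 1) = fun a b =>
      r j a b - r j (x (j + 1)) b * r j a (y (j + 1)) / r j (x (j + 1)) (y (j + 1)))
    (hpiv : ∀ j < k, r j (x (j + 1)) (y (j + 1)) ≠ 0) :
    (∀ i, 1 ≤ i → i ≤ k → ∀ b : Y, f (x i) b - r k (x i) b = f (x i) b) ∧
      (∀ j, 1 ≤ j → j ≤ k → ∀ a : X, f a (y j) - r k a (y j) = f a (y j)) := by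
  have key : ∀ m, m ≤ k →
      (∀ i, 1 ≤ i → i ≤ m → ∀ b : Y, r m (x i) b = 0) ∧
      (∀ j, 1 ≤ j → j ≤ m → ∀ a : X, r m a (y j) = 0) := by
    intro m
    induction m with
    | zero => intro _; exact ⟨fun i h1 h2 _ => absurd (h1.trans h2) (by omega),
        fun j h1 h2 _ => absurd (h1.trans h2) (by omega)⟩
    | succ n ih =>
      intro hmk
      obtain ⟨ihx, ihy⟩ := ih (by omega)
      have piv := hpiv n (by omega)
      constructor
      · intro i h1 h2 b
        rw [hrec n]
        rcases Nat.lt_or_ge i (n + 1) with hi | hi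
        · simp [ihx i h1 (by omega)]
        · have : i = n + 1 := by omega
          subst this
          field_simp
          ring
      · intro j h1 h2 a
        rw [hrec n]
        rcases Nat.lt_or_ge j (n + 1) with hj | hj
        · simp [ihy j h1 (by omega)]
        · have : j = n + 1 := by omega
          subst this
          field_simp
          ring
  obtain ⟨hx, hy⟩ := key k le_rfl
  exact ⟨fun i h1 h2 b => by rw [hx i h1 h2 b]; ring,
    fun j h1 h2 a => by rw [hy j h1 h2 a]; ring⟩
end

section
/- Let pivots be chosen by the partial pivoting rule |r_{j-1}(x_j, y_j)| ≥ |r_{j-1}(x_j, y)| for all y ∈ Y, j = 1,...,k, in the cross approximation recursion. Then |det C_k^{(i)}(y)| ≤ 2^{k-i} |det C_k| for all 1 ≤ i ≤ k and y ∈ Y. -/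
open Matrix Finset

lemma tri_det_bound {n : ℕ} (W : Matrix (Fin n) (Fin n) ℝ)
    (hlow : ∀ p q : Fin n, q < p → W p q = 0)
    (hdiag : ∀ p : Fin n, W p p = 1)
    (hbnd : ∀ p q : Fin n, |W p q| ≤ 1)
    (c : Fin n → ℝ) (hc : ∀ p, |c p| ≤ 1) (i : Fin n) :
    |(W.updateCol i c).det| ≤ 2 ^ (n - 1 - i.val) := by
  have hdet : W.det = 1 := by
    rw [Matrix.det_of_upperTriangular (fun p q h => hlow p q h)]
    simp [hdiag]
  have hunit : IsUnit W.det := hdet ▸ isUnit_one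
  set t : Fin n → ℝ := W⁻¹ *ᵥ c with ht
  have hWt : W *ᵥ t = c := by
    rw [ht, Matrix.mulVec_mulVec, Matrix.mul_nonsing_inv W hunit, Matrix.one_mulVec]
  have ht_eq : ∀ m : Fin n, t m = c m - ∑ q ∈ univ.filter (fun q => m < q), W m q * t q := by
    intro m
    have h1 : ∑ q, W m q * t q = c m := by
      have := congrFun hWt m
      simpa [Matrix.mulVec, dotProduct] using this
    have hsplit := Finset.sum_filter_add_sum_filter_not Finset.univ
      (fun q => m < q) (fun q => W m q * t q)
    have h2 : ∑ q ∈ univ.filter (fun q => ¬ m < q), W m q * t q = t m := by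
      rw [Finset.sum_eq_single m]
      · rw [hdiag, one_mul]
      · intro q hq hne
        rw [hlow m q (lt_of_le_of_ne (not_lt.mp (Finset.mem_filter.mp hq).2) hne), zero_mul]
      · intro h; exact absurd (Finset.mem_filter.mpr ⟨Finset.mem_univ m, lt_irrefl m⟩) h
    rw [h2] at hsplit
    linarith [hsplit, h1]
  -- main induction
  have key : ∀ d : ℕ, ∀ m : Fin n, n - m.val ≤ d →
      |t m| ≤ 2 ^ (n - m.val - 1) ∧
      (∑ q ∈ univ.filter (fun q => m ≤ q), |t q|) ≤ 2 ^ (n - m.val) - 1 := by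
    intro d
    induction d with
    | zero => intro m hm; have := m.isLt; omega
    | succ d ih =>
      intro m hm
      have hS : (∑ q ∈ univ.filter (fun q => m < q), |t q|) ≤ 2 ^ (n - m.val - 1) - 1 := by
        by_cases h : m.val + 1 < n
        · have he : univ.filter (fun q => m < q) =
              univ.filter (fun q => (⟨m.val + 1, h⟩ : Fin n) ≤ q) := by
            ext q
            simp only [Finset.mem_filter, Finset.mem_univ, true_and, Fin.lt_def, Fin.le_def]
            omega
          rw [he]
          have := (ih ⟨m.val + 1, h⟩ (show n - (m.val + 1) ≤ d by omega)).2
          have hexp : n - (m.val + 1) = n - m.val - 1 := by omega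
          rwa [hexp] at this
        · have he : univ.filter (fun q => m < q) = (∅ : Finset (Fin n)) := by
            ext q
            simp only [Finset.mem_filter, Finset.mem_univ, true_and, Fin.lt_def,
              Finset.notMem_empty, iff_false, not_lt]
            have := q.isLt; omega
          rw [he, Finset.sum_empty]
          have : (1 : ℝ) ≤ 2 ^ (n - m.val - 1) := one_le_pow₀ (by norm_num)
          linarith
      have htm : |t m| ≤ 2 ^ (n - m.val - 1) := by
        rw [ht_eq m]
        have h1 : |c m - ∑ q ∈ univ.filter (fun q => m < q), W m q * t q| ≤
            |c m| + ∑ q ∈ univ.filter (fun q => m < q), |t q| := by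
          refine (abs_sub _ _).trans ?_
          gcongr
          refine (Finset.abs_sum_le_sum_abs _ _).trans ?_
          apply Finset.sum_le_sum
          intro q _
          rw [abs_mul]
          calc |W m q| * |t q| ≤ 1 * |t q| := by
                apply mul_le_mul_of_nonneg_right (hbnd m q) (abs_nonneg _)
            _ = |t q| := one_mul _
        calc |c m - _| ≤ |c m| + _ := h1
          _ ≤ 1 + (2 ^ (n - m.val - 1) - 1) := by
              have := hc m; linarith
          _ = 2 ^ (n - m.val - 1) := by ring
      refine ⟨htm, ?_⟩
      have hins : univ.filter (fun q => m ≤ q) = insert m (univ.filter (fun q => m < q)) := by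
        ext q
        simp only [Finset.mem_filter, Finset.mem_univ, true_and, Finset.mem_insert,
          Fin.le_def, Fin.lt_def, Fin.ext_iff]
        omega
      have hnotmem : m ∉ univ.filter (fun q => m < q) := by simp
      rw [hins, Finset.sum_insert hnotmem]
      have hE : n - m.val = (n - m.val - 1) + 1 := by have := m.isLt; omega
      rw [hE, pow_succ]
      linarith
  have hti : |t i| ≤ 2 ^ (n - i.val - 1) := (key n i (by omega)).1
  have hcram : (W.updateCol i c).det = t i := by
    have h1 : (W.updateCol i c).det = Matrix.cramer W c i := (Matrix.cramer_apply _ _ _).symm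
    rw [h1, ← hWt, Matrix.cramer_eq_adjugate_mulVec, Matrix.mulVec_mulVec,
      Matrix.adjugate_mul, hdet]
    simp
  rw [hcram]
  have hexp : n - i.val - 1 = n - 1 - i.val := by omega
  rwa [hexp] at hti




theorem aca_pivoting_det_bound {X Y : Type*} (f : X → Y → ℝ) (k : ℕ)
    (x : ℕ → X) (y : ℕ → Y) (r : ℕ → X → Y → ℝ)
    (hr0 : r 0 = f)
    (hrec : ∀ j, r (j + 1) = fun a b =>
      r j a b - r j (x (j + 1)) b * r j a (y (j + 1)) / r j (x (j + 1)) (y (j + 1)))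
    (hpiv : ∀ j < k, r j (x (j + 1)) (y (j + 1)) ≠ 0)
    (hrule : ∀ j < k, ∀ b : Y, |r j (x (j + 1)) b| ≤ |r j (x (j + 1)) (y (j + 1))|)
    (C : Matrix (Fin k) (Fin k) ℝ)
    (hC : C = Matrix.of fun i j : Fin k => f (x (i.val + 1)) (y (j.val + 1))) :
    ∀ (i : Fin k) (b : Y),
      |(C.updateCol i fun p : Fin k => f (x (p.val + 1)) b).det| ≤
        2 ^ (k - 1 - i.val) * |C.det| := by
  intro i b
  set u : ℕ → X → ℝ := fun m a => r m a (y (m + 1)) with hu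
  set w : ℕ → Y → ℝ := fun m c => r m (x (m + 1)) c / r m (x (m + 1)) (y (m + 1)) with hw
  -- unrolled recursion
  have claimA : ∀ j (a : X) (c : Y),
      r j a c = f a c - ∑ m ∈ Finset.range j, u m a * w m c := by
    intro j
    induction j with
    | zero => intro a c; simp [hr0]
    | succ j ih =>
      intro a c
      rw [hrec j]
      simp only
      rw [ih a c, Finset.sum_range_succ, hu, hw]
      simp only
      ring
  -- residual vanishes at previous pivot rows
  have claimB : ∀ j, j ≤ k → ∀ p, p < j → ∀ c : Y, r j (x (p + 1)) c = 0 := by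
    intro j
    induction j with
    | zero => intro _ p hp; omega
    | succ j ih =>
      intro hjk p hp c
      rw [hrec j]
      simp only
      rcases Nat.lt_or_ge p j with h | h
      · rw [ih (by omega) p h c, ih (by omega) p h (y (j + 1))]
        simp
      · have hpj : p = j := by omega
        subst hpj
        rw [mul_div_assoc, div_self (hpiv p (by omega)), mul_one, sub_self]
  -- residual vanishes at previous pivot columns
  have claimC : ∀ j, j ≤ k → ∀ q, q < j → ∀ a : X, r j a (y (q + 1)) = 0 := by
    intro j
    induction j with
    | zero => intro _ q hq; omega
    | succ j ih =>
      intro hjk q hq a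
      rw [hrec j]
      simp only
      rcases Nat.lt_or_ge q j with h | h
      · rw [ih (by omega) q h a, ih (by omega) q h (x (j + 1))]
        simp
      · have hqj : q = j := by omega
        subst hqj
        rw [mul_comm, mul_div_assoc, div_self (hpiv q (by omega)), mul_one, sub_self]
  set U : Matrix (Fin k) (Fin k) ℝ := Matrix.of fun p m : Fin k => u m.val (x (p.val + 1)) with hU
  set W : Matrix (Fin k) (Fin k) ℝ := Matrix.of fun m q : Fin k => w m.val (y (q.val + 1)) with hW
  have hfact : ∀ (p : Fin k) (c : Y),
      f (x (p.val + 1)) c = ∑ m : Fin k, U p m * w m.val c := by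
    intro p c
    have h0 := claimB k le_rfl p.val p.isLt c
    rw [claimA k (x (p.val + 1)) c, sub_eq_zero] at h0
    rw [h0, ← Fin.sum_univ_eq_sum_range (fun m => u m (x (p.val + 1)) * w m c) k]
    simp [hU]
  have hwbnd : ∀ (m : ℕ), m < k → ∀ c : Y, |w m c| ≤ 1 := by
    intro m hm c
    rw [hw]
    simp only
    rw [abs_div]
    apply div_le_one_of_le₀ (hrule m hm c) (abs_nonneg _)
  have hWlow : ∀ p q : Fin k, q < p → W p q = 0 := by
    intro p q hqp
    rw [hW]
    simp only [Matrix.of_apply]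
    rw [hw]
    simp only
    rw [claimC p.val (le_of_lt p.isLt) q.val hqp _, zero_div]
  have hWdiag : ∀ p : Fin k, W p p = 1 := by
    intro p
    rw [hW]
    simp only [Matrix.of_apply]
    rw [hw]
    simp only
    exact div_self (hpiv p.val p.isLt)
  have hWbnd : ∀ p q : Fin k, |W p q| ≤ 1 := by
    intro p q
    exact hwbnd p.val p.isLt _
  have hCW : C = U * W := by
    rw [hC]
    ext p q
    rw [Matrix.mul_apply]
    simpa [hW] using hfact p (y (q.val + 1))
  have hupd : C.updateCol i (fun p : Fin k => f (x (p.val + 1)) b) =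
      U * (W.updateCol i (fun m : Fin k => w m.val b)) := by
    ext p q
    rw [Matrix.updateCol_apply, Matrix.mul_apply]
    by_cases h : q = i
    · subst h
      rw [if_pos rfl]
      have : (W.updateCol q fun m : Fin k => w m.val b) = fun m j : Fin k =>
          if j = q then w m.val b else W m j := by
        ext m j
        rw [Matrix.updateCol_apply]
      rw [this]
      simp only [if_pos rfl]
      exact hfact p b
    · simp only [Matrix.updateCol_apply, if_neg h]
      rw [← Matrix.mul_apply, ← hCW, hC]
  have hWdet : W.det = 1 := by
    rw [Matrix.det_of_upperTriangular (fun p q h => hWlow p q h)]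
    simp [hWdiag]
  have hkey := tri_det_bound W hWlow hWdiag hWbnd (fun m : Fin k => w m.val b)
    (fun m => hwbnd m.val m.isLt b) i
  rw [hupd, Matrix.det_mul, abs_mul, hCW, Matrix.det_mul, hWdet, mul_one]
  rw [mul_comm (2 ^ (k - 1 - i.val)) |U.det|]
  exact mul_le_mul_of_nonneg_left hkey (abs_nonneg _)
end
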